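/- For every real ε and every integer m ≥ 1, setting Q_ε := ½(id−S) + ε·J^{⋆m} (the grade-m pre-remainder of the perturbed sinhlog integrator), the following identity holds for every real inner product space and every family of vectors (V_w), with the inner product taken over the words of length m: ‖(id−E)∘id‖² = ‖(id−E)∘Q_ε‖² + ‖(id−E)∘½(id+S)‖² − ε·⟨(id−E)∘(id−S), (id−E)∘J^{⋆m}⟩ − ε²·‖(id−E)∘J^{⋆m}‖². -/

import Mathlib

open Finsupp

/-- Words over the alphabet `A = {0,1,…,d}`. -/
abbrev Word (d : ℕ) : Type := List (Fin (d+1))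

/-- The free real vector space with basis the set of all words. -/
abbrev KA (d : ℕ) : Type := Word d →₀ ℝ

/-- Shuffle product of two words, as an element of `KA d`. -/
noncomputable def shuffleWord (d : ℕ) : Word d → Word d → KA d
  | [], v => Finsupp.single v 1
  | a :: u, [] => Finsupp.single (a :: u) 1
  | a :: u, b :: v =>
      Finsupp.mapDomain (List.cons a) (shuffleWord d u (b :: v)) +
      Finsupp.mapDomain (List.cons b) (shuffleWord d (a :: u) v)
  termination_by u v => u.length + v.length

/-- Bilinear extension of the shuffle product to `KA d`. -/
noncomputable def sh (d : ℕ) (x y : KA d) : KA d :=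
  x.sum fun u cu => y.sum fun v cv => (cu * cv) • shuffleWord d u v

/-- Admissible words: concatenations of blocks each of which is the single
letter `0` or a pair `aa` with `a ≠ 0`. -/
inductive Admissible (d : ℕ) : Word d → Prop
  | nil : Admissible d []
  | zero {w : Word d} : Admissible d w → Admissible d (0 :: w)
  | pair {w : Word d} (a : Fin (d+1)) : a ≠ 0 → Admissible d w →
      Admissible d (a :: a :: w)

/-- Number of `0` letters. -/
def zc (d : ℕ) (w : Word d) : ℕ := w.count 0

/-- Half the number of nonzero letters. -/
def dc (d : ℕ) (w : Word d) : ℕ := (w.length - w.count 0) / 2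

def nc (d : ℕ) (w : Word d) : ℕ := zc d w + dc d w

open Classical in
/-- The expectation map on words. -/
noncomputable def Ebar (d : ℕ) (t : ℝ) (w : Word d) : ℝ :=
  if Admissible d w then t ^ nc d w / (2 ^ dc d w * Nat.factorial (nc d w)) else 0

/-- Linear extension of the expectation map to `KA d`. -/
noncomputable def EbarL (d : ℕ) (t : ℝ) (x : KA d) : ℝ :=
  x.sum fun w c => c * Ebar d t w

/-- The linear endomorphism of `KA d` determined by values on basis words. -/
noncomputable def wordLift (d : ℕ) (f : Word d → KA d) : KA d →ₗ[ℝ] KA d :=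
  Finsupp.lsum ℝ fun w => LinearMap.toSpanSingleton ℝ (KA d) (f w)

/-- The identity endomorphism `id`. -/
noncomputable def idE (d : ℕ) : KA d →ₗ[ℝ] KA d := LinearMap.id

/-- The reversal endomorphism `|S|`. -/
noncomputable def revE (d : ℕ) : KA d →ₗ[ℝ] KA d :=
  wordLift d fun w => Finsupp.single w.reverse 1

/-- The antipode `S`. -/
noncomputable def Sa (d : ℕ) : KA d →ₗ[ℝ] KA d :=
  wordLift d fun w => Finsupp.single w.reverse ((-1 : ℝ) ^ w.length)

/-- The convolution unit `ν`. -/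
noncomputable def nuE (d : ℕ) : KA d →ₗ[ℝ] KA d :=
  wordLift d fun w => if w = [] then Finsupp.single ([] : Word d) 1 else 0

/-- The expectation endomorphism `E`. -/
noncomputable def EE (d : ℕ) (t : ℝ) : KA d →ₗ[ℝ] KA d :=
  wordLift d fun w => Finsupp.single ([] : Word d) (Ebar d t w)

/-- The convolution product `X ⋆ Y`. -/
noncomputable def conv (d : ℕ) (X Y : KA d →ₗ[ℝ] KA d) : KA d →ₗ[ℝ] KA d :=
  wordLift d fun w => ∑ k ∈ Finset.range (w.length + 1),
    sh d (X (Finsupp.single (w.take k) 1)) (Y (Finsupp.single (w.drop k) 1))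

/-- Convolution powers, `X^{⋆0} = ν`. -/
noncomputable def convPow (d : ℕ) (X : KA d →ₗ[ℝ] KA d) : ℕ → (KA d →ₗ[ℝ] KA d)
  | 0 => nuE d
  | k + 1 => conv d X (convPow d X k)

/-- The inner product `⟨X,Y⟩` of endomorphisms, taken over the words of
length `n`, relative to the family of vectors `Vf`. -/
noncomputable def ip (d : ℕ) (t : ℝ) {H : Type*} [NormedAddCommGroup H]
    [InnerProductSpace ℝ H] (Vf : Word d → H) (n : ℕ)
    (X Y : KA d →ₗ[ℝ] KA d) : ℝ :=
  ∑ u : Fin n → Fin (d+1), ∑ v : Fin n → Fin (d+1),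
    EbarL d t (sh d (X (Finsupp.single (List.ofFn u) 1))
                    (Y (Finsupp.single (List.ofFn v) 1))) *
      (inner ℝ (Vf (List.ofFn u)) (Vf (List.ofFn v)) : ℝ)

/-- Positive semidefiniteness of the expectation Gram matrix at grade `n`:
indexed by the words of length `n` together with the empty word. -/
def gramPSD (d n : ℕ) (t : ℝ) : Prop :=
  ∀ c : Option (Fin n → Fin (d+1)) → ℝ,
    0 ≤ ∑ x : Option (Fin n → Fin (d+1)), ∑ y : Option (Fin n → Fin (d+1)),
      c x * c y *
        EbarL d t (shuffleWord d (x.elim ([] : Word d) List.ofFn)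
                                 (y.elim ([] : Word d) List.ofFn))

/-- The grade-`m` pre-remainder `Q_ε = ½(id−S) + ε·J^{⋆m}` of the perturbed
sinhlog integrator. -/
noncomputable def Qeps (d m : ℕ) (ε : ℝ) : KA d →ₗ[ℝ] KA d :=
  (1 / 2 : ℝ) • (idE d - Sa d) + ε • convPow d (idE d - nuE d) m

variable {d : ℕ}

lemma shuffleWord_nil_left (v : Word d) : shuffleWord d [] v = Finsupp.single v 1 := by
  cases v <;> simp [shuffleWord]

lemma shuffleWord_nil_right (u : Word d) : shuffleWord d u [] = Finsupp.single u 1 := by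
  cases u <;> simp [shuffleWord]

lemma shuffleWord_cons_cons (a b : Fin (d+1)) (u v : Word d) :
    shuffleWord d (a :: u) (b :: v) =
      Finsupp.mapDomain (List.cons a) (shuffleWord d u (b :: v)) +
      Finsupp.mapDomain (List.cons b) (shuffleWord d (a :: u) v) := by
  rw [shuffleWord]

lemma shuffleWord_comm (u v : Word d) : shuffleWord d u v = shuffleWord d v u := by
  generalize hn : u.length + v.length = n
  induction n using Nat.strong_induction_on generalizing u v with
  | _ n ih =>
    cases u with
    | nil => simp [shuffleWord_nil_left, shuffleWord_nil_right]
    | cons a u' =>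
      cases v with
      | nil => simp [shuffleWord_nil_left, shuffleWord_nil_right]
      | cons b v' =>
        rw [shuffleWord_cons_cons, shuffleWord_cons_cons,
          ih (u'.length + (b::v').length) (by subst hn; simp) u' (b::v') rfl,
          ih ((a::u').length + v'.length) (by subst hn; simp) (a::u') v' rfl,
          add_comm]
lemma mapDomain_cons_append (c a : Fin (d+1)) (x : KA d) :
    Finsupp.mapDomain (List.cons c) (Finsupp.mapDomain (· ++ [a]) x)
      = Finsupp.mapDomain (· ++ [a]) (Finsupp.mapDomain (List.cons c) x) := by
  rw [← Finsupp.mapDomain_comp, ← Finsupp.mapDomain_comp]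
  rfl

lemma shuffleWord_snoc (a b : Fin (d+1)) (u v : Word d) :
    shuffleWord d (u ++ [a]) (v ++ [b]) =
      Finsupp.mapDomain (· ++ [a]) (shuffleWord d u (v ++ [b])) +
      Finsupp.mapDomain (· ++ [b]) (shuffleWord d (u ++ [a]) v) := by
  generalize hn : u.length + v.length = n
  induction n using Nat.strong_induction_on generalizing u v with
  | _ n ih =>
    cases u with
    | nil =>
      cases v with
      | nil =>
        simp only [List.nil_append, shuffleWord_cons_cons, shuffleWord_nil_left,
          shuffleWord_nil_right, Finsupp.mapDomain_single, List.cons_append, List.nil_append]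
        exact add_comm _ _
      | cons c v' =>
        have h1 := ih (0 + v'.length) (by subst hn; simp) ([] : Word d) v' rfl
        simp only [List.nil_append] at h1 ⊢
        rw [show (c :: v') ++ [b] = c :: (v' ++ [b]) from rfl,
          shuffleWord_cons_cons a c [] (v' ++ [b]),
          shuffleWord_cons_cons a c [] v', h1]
        simp only [Finsupp.mapDomain_add, shuffleWord_nil_left, Finsupp.mapDomain_single,
          mapDomain_cons_append, List.cons_append, List.append_assoc]
        abel
    | cons c u' =>
      cases v with
      | nil =>
        have h1 := ih (u'.length + 0) (by subst hn; simp) u' ([] : Word d) rfl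
        simp only [List.nil_append] at h1 ⊢
        rw [show (c :: u') ++ [a] = c :: (u' ++ [a]) from rfl,
          shuffleWord_cons_cons c b (u' ++ [a]) [],
          shuffleWord_cons_cons c b u' [], h1]
        simp only [Finsupp.mapDomain_add, shuffleWord_nil_left, shuffleWord_nil_right,
          Finsupp.mapDomain_single, mapDomain_cons_append, List.cons_append, List.append_assoc]
        abel
      | cons e v' =>
        have h1 := ih (u'.length + (e :: v').length) (by subst hn; simp) u' (e :: v') rfl
        have h2 := ih ((c :: u').length + v'.length) (by subst hn; simp) (c :: u') v' rfl
        rw [show (c :: u') ++ [a] = c :: (u' ++ [a]) from rfl,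
          show (e :: v') ++ [b] = e :: (v' ++ [b]) from rfl,
          shuffleWord_cons_cons c e (u' ++ [a]) (v' ++ [b]),
          shuffleWord_cons_cons c e u' (v' ++ [b]),
          shuffleWord_cons_cons c e (u' ++ [a]) v',
          show e :: (v' ++ [b]) = (e :: v') ++ [b] from rfl, h1,
          show c :: (u' ++ [a]) = (c :: u') ++ [a] from rfl, h2]
        simp only [Finsupp.mapDomain_add, mapDomain_cons_append]
        abel
lemma mapDomain_reverse_cons (a : Fin (d+1)) (x : KA d) :
    Finsupp.mapDomain List.reverse (Finsupp.mapDomain (List.cons a) x)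
      = Finsupp.mapDomain (· ++ [a]) (Finsupp.mapDomain List.reverse x) := by
  rw [← Finsupp.mapDomain_comp, ← Finsupp.mapDomain_comp]
  congr 1
  funext w
  simp [Function.comp]

lemma shuffleWord_reverse (u v : Word d) :
    shuffleWord d u.reverse v.reverse = Finsupp.mapDomain List.reverse (shuffleWord d u v) := by
  generalize hn : u.length + v.length = n
  induction n using Nat.strong_induction_on generalizing u v with
  | _ n ih =>
    cases u with
    | nil => simp [shuffleWord_nil_left, Finsupp.mapDomain_single]
    | cons a u' =>
      cases v with
      | nil => simp [shuffleWord_nil_left, shuffleWord_nil_right, Finsupp.mapDomain_single]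
      | cons b v' =>
        have h1 := ih (u'.length + (b :: v').length) (by subst hn; simp) u' (b :: v') rfl
        have h2 := ih ((a :: u').length + v'.length) (by subst hn; simp) (a :: u') v' rfl
        rw [shuffleWord_cons_cons, Finsupp.mapDomain_add, mapDomain_reverse_cons,
          mapDomain_reverse_cons, ← h1, ← h2,
          show (a :: u').reverse = u'.reverse ++ [a] by simp,
          show (b :: v').reverse = v'.reverse ++ [b] by simp,
          shuffleWord_snoc]
lemma Admissible.append_zero {w : Word d} (h : Admissible d w) :
    Admissible d (w ++ [0]) := by
  induction h with
  | nil => exact Admissible.zero Admissible.nil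
  | zero _ ih => exact Admissible.zero ih
  | pair a ha _ ih => exact Admissible.pair a ha ih

lemma Admissible.append_pair {w : Word d} (a : Fin (d+1)) (ha : a ≠ 0)
    (h : Admissible d w) : Admissible d (w ++ [a, a]) := by
  induction h with
  | nil => exact Admissible.pair a ha Admissible.nil
  | zero _ ih => exact Admissible.zero ih
  | pair b hb _ ih => exact Admissible.pair b hb ih

lemma Admissible.reverse {w : Word d} (h : Admissible d w) :
    Admissible d w.reverse := by
  induction h with
  | nil => exact Admissible.nil
  | zero _ ih => simpa using ih.append_zero
  | pair a ha _ ih => simpa using ih.append_pair a ha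

lemma admissible_reverse_iff (w : Word d) :
    Admissible d w.reverse ↔ Admissible d w := by
  constructor
  · intro h; simpa using h.reverse
  · exact Admissible.reverse

lemma Ebar_reverse (t : ℝ) (w : Word d) : Ebar d t w.reverse = Ebar d t w := by
  unfold Ebar
  rw [admissible_reverse_iff]
  simp [nc, zc, dc, List.count_reverse]
lemma EbarL_single (t : ℝ) (w : Word d) (c : ℝ) :
    EbarL d t (Finsupp.single w c) = c * Ebar d t w := by
  unfold EbarL
  rw [Finsupp.sum_single_index]
  simp

lemma EbarL_add (t : ℝ) (x y : KA d) : EbarL d t (x + y) = EbarL d t x + EbarL d t y := by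
  unfold EbarL
  rw [Finsupp.sum_add_index'] <;> intros <;> simp [add_mul]

lemma EbarL_smul (t : ℝ) (c : ℝ) (x : KA d) : EbarL d t (c • x) = c * EbarL d t x := by
  unfold EbarL
  rw [Finsupp.sum_smul_index, Finsupp.mul_sum]
  · simp [mul_assoc]
  · intro w; simp

lemma EbarL_neg (t : ℝ) (x : KA d) : EbarL d t (-x) = - EbarL d t x := by
  rw [← neg_one_smul ℝ x, EbarL_smul]; ring

lemma EbarL_sub (t : ℝ) (x y : KA d) : EbarL d t (x - y) = EbarL d t x - EbarL d t y := by
  rw [sub_eq_add_neg, EbarL_add, EbarL_neg]; ring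

lemma EbarL_mapDomain_reverse (t : ℝ) (x : KA d) :
    EbarL d t (Finsupp.mapDomain List.reverse x) = EbarL d t x := by
  unfold EbarL
  rw [Finsupp.sum_mapDomain_index (by intro a; simp) (by intro a b₁ b₂; rw [add_mul])]
  simp [Ebar_reverse]

lemma sh_single_single (x y : Word d) (α β : ℝ) :
    sh d (Finsupp.single x α) (Finsupp.single y β) = (α * β) • shuffleWord d x y := by
  unfold sh
  rw [Finsupp.sum_single_index, Finsupp.sum_single_index]
  · simp
  · simp

lemma sh_add_left (x y z : KA d) : sh d (x + y) z = sh d x z + sh d y z := by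
  unfold sh
  rw [Finsupp.sum_add_index']
  · intro u; simp
  · intro u c₁ c₂
    rw [← Finsupp.sum_add]
    congr 1; funext v cv
    rw [add_mul, add_smul]

lemma sh_smul_left (c : ℝ) (x z : KA d) : sh d (c • x) z = c • sh d x z := by
  unfold sh
  rw [Finsupp.sum_smul_index (by intro u; simp), Finsupp.smul_sum]
  congr 1; funext u cu
  rw [Finsupp.smul_sum]
  congr 1; funext v cv
  rw [smul_smul, mul_assoc]

lemma sh_comm (x y : KA d) : sh d x y = sh d y x := by
  unfold sh
  rw [Finsupp.sum_comm]
  congr 1; funext u cu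
  congr 1; funext v cv
  rw [mul_comm, shuffleWord_comm]

lemma sh_add_right (x y z : KA d) : sh d x (y + z) = sh d x y + sh d x z := by
  rw [sh_comm, sh_add_left, sh_comm y x, sh_comm z x]

lemma sh_smul_right (c : ℝ) (x z : KA d) : sh d x (c • z) = c • sh d x z := by
  rw [sh_comm, sh_smul_left, sh_comm z x]

lemma sh_neg_left (x z : KA d) : sh d (-x) z = - sh d x z := by
  rw [← neg_one_smul ℝ x, sh_smul_left, neg_one_smul]

lemma sh_neg_right (x z : KA d) : sh d x (-z) = - sh d x z := by
  rw [sh_comm, sh_neg_left, sh_comm z x]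

lemma sh_sub_left (x y z : KA d) : sh d (x - y) z = sh d x z - sh d y z := by
  rw [sub_eq_add_neg, sh_add_left, sh_neg_left, sub_eq_add_neg]

lemma sh_sub_right (x y z : KA d) : sh d x (y - z) = sh d x y - sh d x z := by
  rw [sh_comm, sh_sub_left, sh_comm y x, sh_comm z x]
lemma wordLift_single (f : Word d → KA d) (w : Word d) (c : ℝ) :
    wordLift d f (Finsupp.single w c) = c • f w := by
  simp [wordLift]

lemma Sa_single (w : Word d) :
    Sa d (Finsupp.single w 1) = ((-1 : ℝ) ^ w.length) • Finsupp.single w.reverse 1 := by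
  rw [Sa, wordLift_single, one_smul, Finsupp.smul_single, smul_eq_mul, mul_one]

lemma EE_single (t : ℝ) (w : Word d) (c : ℝ) :
    EE d t (Finsupp.single w c) = Finsupp.single ([] : Word d) (c * Ebar d t w) := by
  rw [EE, wordLift_single, Finsupp.smul_single, smul_eq_mul]

lemma F_single (t : ℝ) (w : Word d) :
    (idE d - EE d t) (Finsupp.single w 1)
      = Finsupp.single w 1 - Finsupp.single ([] : Word d) (Ebar d t w) := by
  rw [LinearMap.sub_apply, EE_single, one_mul, idE, LinearMap.id_apply]

lemma EbarL_sh_Aw_rev (t : ℝ) (x y : Word d) :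
    EbarL d t (sh d
        (Finsupp.single x.reverse 1 - Finsupp.single ([] : Word d) (Ebar d t x.reverse))
        (Finsupp.single y.reverse 1 - Finsupp.single ([] : Word d) (Ebar d t y.reverse)))
      = EbarL d t (sh d
        (Finsupp.single x 1 - Finsupp.single ([] : Word d) (Ebar d t x))
        (Finsupp.single y 1 - Finsupp.single ([] : Word d) (Ebar d t y))) := by
  simp only [sh_sub_left, sh_sub_right, sh_single_single, EbarL_sub, EbarL_smul,
    shuffleWord_nil_left, shuffleWord_nil_right, EbarL_single, Ebar_reverse,
    shuffleWord_reverse, EbarL_mapDomain_reverse]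
section ipLemmas

variable (t : ℝ) {H : Type*} [NormedAddCommGroup H] [InnerProductSpace ℝ H]
  (Vf : Word d → H) (n : ℕ)

lemma ip_add_left (X X' Y : KA d →ₗ[ℝ] KA d) :
    ip d t Vf n (X + X') Y = ip d t Vf n X Y + ip d t Vf n X' Y := by
  unfold ip
  rw [← Finset.sum_add_distrib]
  congr 1; funext u
  rw [← Finset.sum_add_distrib]
  congr 1; funext v
  rw [LinearMap.add_apply, sh_add_left, EbarL_add, add_mul]

lemma ip_smul_left (c : ℝ) (X Y : KA d →ₗ[ℝ] KA d) :
    ip d t Vf n (c • X) Y = c * ip d t Vf n X Y := by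
  unfold ip
  rw [Finset.mul_sum]
  congr 1; funext u
  rw [Finset.mul_sum]
  congr 1; funext v
  rw [LinearMap.smul_apply, sh_smul_left, EbarL_smul, mul_assoc]

lemma ip_symm (X Y : KA d →ₗ[ℝ] KA d) :
    ip d t Vf n X Y = ip d t Vf n Y X := by
  unfold ip
  rw [Finset.sum_comm]
  congr 1; funext u
  congr 1; funext v
  rw [sh_comm, real_inner_comm]

lemma ip_add_right (X Y Y' : KA d →ₗ[ℝ] KA d) :
    ip d t Vf n X (Y + Y') = ip d t Vf n X Y + ip d t Vf n X Y' := by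
  rw [ip_symm, ip_add_left, ip_symm t Vf n Y X, ip_symm t Vf n Y' X]

lemma ip_smul_right (c : ℝ) (X Y : KA d →ₗ[ℝ] KA d) :
    ip d t Vf n X (c • Y) = c * ip d t Vf n X Y := by
  rw [ip_symm, ip_smul_left, ip_symm t Vf n Y X]

lemma ip_SS (m : ℕ) :
    ip d t Vf m ((idE d - EE d t) ∘ₗ Sa d) ((idE d - EE d t) ∘ₗ Sa d)
      = ip d t Vf m ((idE d - EE d t) ∘ₗ idE d) ((idE d - EE d t) ∘ₗ idE d) := by
  unfold ip
  refine Finset.sum_congr rfl fun u _ => Finset.sum_congr rfl fun v _ => ?_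
  congr 1
  have hx : ∀ w : Word d, ((idE d - EE d t) ∘ₗ Sa d) (Finsupp.single w 1)
      = ((-1 : ℝ) ^ w.length) •
        (Finsupp.single w.reverse 1 - Finsupp.single ([] : Word d) (Ebar d t w.reverse)) := by
    intro w
    rw [LinearMap.comp_apply, Sa_single, map_smul, F_single]
  have hy : ∀ w : Word d, ((idE d - EE d t) ∘ₗ idE d) (Finsupp.single w 1)
      = Finsupp.single w 1 - Finsupp.single ([] : Word d) (Ebar d t w) := by
    intro w
    rw [LinearMap.comp_apply]
    exact F_single t w
  rw [hx, hx, hy, hy, sh_smul_left, sh_smul_right, EbarL_smul, EbarL_smul,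
    EbarL_sh_Aw_rev, List.length_ofFn, List.length_ofFn, ← mul_assoc, ← pow_add,
    show ((-1 : ℝ)) ^ (m + m) = 1 by rw [← two_mul, pow_mul]; norm_num, one_mul]

end ipLemmas
section ipLemmas2
variable (t : ℝ) {H : Type*} [NormedAddCommGroup H] [InnerProductSpace ℝ H]
  (Vf : Word d → H) (n : ℕ)

lemma ip_sub_left (X X' Y : KA d →ₗ[ℝ] KA d) :
    ip d t Vf n (X - X') Y = ip d t Vf n X Y - ip d t Vf n X' Y := by
  have h : X - X' = X + (-1 : ℝ) • X' := LinearMap.ext fun z => by simp [sub_eq_add_neg]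
  rw [h, ip_add_left, ip_smul_left]; ring

lemma ip_sub_right (X Y Y' : KA d →ₗ[ℝ] KA d) :
    ip d t Vf n X (Y - Y') = ip d t Vf n X Y - ip d t Vf n X Y' := by
  have h : Y - Y' = Y + (-1 : ℝ) • Y' := LinearMap.ext fun z => by simp [sub_eq_add_neg]
  rw [h, ip_add_right, ip_smul_right]; ring

end ipLemmas2
theorem stmt_5 (d m : ℕ) (hd : 1 ≤ d) (hm : 1 ≤ m) (t : ℝ) (ht : 0 < t)
    {H : Type*} [NormedAddCommGroup H] [InnerProductSpace ℝ H]
    (Vf : Word d → H) (ε : ℝ) :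
    ip d t Vf m ((idE d - EE d t) ∘ₗ idE d) ((idE d - EE d t) ∘ₗ idE d)
      = ip d t Vf m ((idE d - EE d t) ∘ₗ Qeps d m ε) ((idE d - EE d t) ∘ₗ Qeps d m ε)
        + ip d t Vf m ((idE d - EE d t) ∘ₗ ((1 / 2 : ℝ) • (idE d + Sa d)))
                      ((idE d - EE d t) ∘ₗ ((1 / 2 : ℝ) • (idE d + Sa d)))
        - ε * ip d t Vf m ((idE d - EE d t) ∘ₗ (idE d - Sa d))
                          ((idE d - EE d t) ∘ₗ convPow d (idE d - nuE d) m)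
        - ε ^ 2 * ip d t Vf m ((idE d - EE d t) ∘ₗ convPow d (idE d - nuE d) m)
                              ((idE d - EE d t) ∘ₗ convPow d (idE d - nuE d) m) := by
  have hcadd : ∀ X Y : KA d →ₗ[ℝ] KA d,
      (idE d - EE d t) ∘ₗ (X + Y) = (idE d - EE d t) ∘ₗ X + (idE d - EE d t) ∘ₗ Y :=
    fun X Y => LinearMap.ext fun z => by simp; abel
  have hcsub : ∀ X Y : KA d →ₗ[ℝ] KA d,
      (idE d - EE d t) ∘ₗ (X - Y) = (idE d - EE d t) ∘ₗ X - (idE d - EE d t) ∘ₗ Y :=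
    fun X Y => LinearMap.ext fun z => by simp; abel
  have hcsmul : ∀ (c : ℝ) (X : KA d →ₗ[ℝ] KA d),
      (idE d - EE d t) ∘ₗ (c • X) = c • ((idE d - EE d t) ∘ₗ X) :=
    fun c X => LinearMap.ext fun z => by simp
  simp only [Qeps, hcadd, hcsub, hcsmul, ip_add_left, ip_add_right, ip_smul_left,
    ip_smul_right, ip_sub_left, ip_sub_right, ip_SS]
  rw [ip_symm t Vf m ((idE d - EE d t) ∘ₗ Sa d) ((idE d - EE d t) ∘ₗ idE d),
    ip_symm t Vf m ((idE d - EE d t) ∘ₗ convPow d (idE d - nuE d) m)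
      ((idE d - EE d t) ∘ₗ idE d),
    ip_symm t Vf m ((idE d - EE d t) ∘ₗ convPow d (idE d - nuE d) m)
      ((idE d - EE d t) ∘ₗ Sa d)]
  ring
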